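/- Let a, b, c be weak compositions of length n. If a ⪯ c and b ⪯ c in the key poset, then a ∪ b ⪯ c, where (a ∪ b)_i = max(a_i, b_i). -/
import Mathlib

/-- The key poset order on weak compositions of length `n` (functions `Fin n → ℕ`):
`a ⪯ b` iff `a i ≤ b i` for all `i`, and for all `i < j`, if `b j > a j` and
`a i > a j` then `b i > b j`. -/
def KeyLE {n : ℕ} (a b : Fin n → ℕ) : Prop :=
  (∀ i, a i ≤ b i) ∧ ∀ i j : Fin n, i < j → a j < b j → a j < a i → b j < b i

/-- Strict key order. -/
def KeyLT {n : ℕ} (a b : Fin n → ℕ) : Prop := KeyLE a b ∧ a ≠ b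

/-- Cover relation in the key poset. -/
def KeyCovers {n : ℕ} (a b : Fin n → ℕ) : Prop :=
  KeyLT a b ∧ ¬ ∃ c : Fin n → ℕ, KeyLT a c ∧ KeyLT c b

/-- The rank of a weak composition: the sum of its parts. -/
def rk {n : ℕ} (a : Fin n → ℕ) : ℕ := ∑ i, a i

/-- If a ⪯ c and b ⪯ c then a ∪ b ⪯ c (componentwise maximum). -/
theorem keyLE_union {n : ℕ} (a b c : Fin n → ℕ)
    (ha : KeyLE a c) (hb : KeyLE b c) :
    KeyLE (fun i => max (a i) (b i)) c := by
  constructor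
  · intro i
    exact max_le (ha.1 i) (hb.1 i)
  · intro i j hij h1 h2
    simp only at h1 h2
    rcases max_cases (a i) (b i) with ⟨hm, _⟩ | ⟨hm, _⟩
    · exact ha.2 i j hij (lt_of_le_of_lt (le_max_left _ _) h1)
        (lt_of_le_of_lt (le_max_left _ _) (hm ▸ h2))
    · exact hb.2 i j hij (lt_of_le_of_lt (le_max_right _ _) h1)
        (lt_of_le_of_lt (le_max_right _ _) (hm ▸ h2))
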